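/- Let S be the set of natural numbers whose decimal expansion has an even number of digits and S' its complement in ℕ. Then S and S' are incomparable in the germ-ordering: neither S ⪯ S' nor S' ⪯ S holds. -/

import Mathlib

noncomputable def genFun (S : Set ℕ) (q : ℝ) : ℝ := ∑' n : S, q ^ (n : ℕ)

def GermLE (S S' : Set ℕ) : Prop :=
  ∃ ε > (0 : ℝ), ∀ q ∈ Set.Ioo (1 - ε) (1 : ℝ), genFun S q ≤ genFun S' q

/-- The set of natural numbers with an even number of decimal digits
(0 is regarded as having one digit). -/
def EvenDigits : Set ℕ :=
  {n : ℕ | ∃ k : ℕ, 10 ^ (2 * k + 1) ≤ n ∧ n < 10 ^ (2 * k + 2)}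

section Aux

variable {q : ℝ}

private lemma genFun_eq (S : Set ℕ) (q : ℝ) :
    genFun S q = ∑' n : ℕ, S.indicator (fun m => q ^ m) n := tsum_subtype S _

private lemma summable_pow (h0 : 0 ≤ q) (h1 : q < 1) : Summable (fun n : ℕ => q ^ n) :=
  summable_geometric_of_lt_one h0 h1

private lemma summable_ind (S : Set ℕ) (h0 : 0 ≤ q) (h1 : q < 1) :
    Summable (fun n : ℕ => S.indicator (fun m => q ^ m) n) :=
  (summable_pow h0 h1).indicator S

private lemma ind_nonneg (S : Set ℕ) (h0 : 0 ≤ q) (n : ℕ) :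
    0 ≤ S.indicator (fun m => q ^ m) n :=
  Set.indicator_nonneg (fun m _ => pow_nonneg h0 m) n

private lemma ind_le_pow (S : Set ℕ) (h0 : 0 ≤ q) (n : ℕ) :
    S.indicator (fun m => q ^ m) n ≤ q ^ n :=
  Set.indicator_le_self' (fun m _ => pow_nonneg h0 m) n

private lemma genFun_add_compl (S : Set ℕ) (h0 : 0 ≤ q) (h1 : q < 1) :
    genFun S q + genFun Sᶜ q = (1 - q)⁻¹ := by
  rw [genFun_eq, genFun_eq, ← tsum_geometric_of_lt_one h0 h1,
    ← Summable.tsum_add (summable_ind S h0 h1) (summable_ind Sᶜ h0 h1)]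
  congr 1
  funext n
  by_cases h : n ∈ S <;> simp [Set.indicator_apply, h]

private lemma exists_q (θ : ℝ) (hθ : 0 < θ) (M : ℕ) :
    ∃ q : ℝ, 0 < q ∧ q < 1 ∧ q ^ (10 ^ M) = Real.exp (-θ) ∧ 1 - q ≤ θ / 10 ^ M := by
  refine ⟨Real.exp (-(θ / 10 ^ M)), Real.exp_pos _, ?_, ?_, ?_⟩
  · rw [Real.exp_lt_one_iff]
    have : (0:ℝ) < θ / 10 ^ M := by positivity
    linarith
  · rw [← Real.exp_nat_mul]
    congr 1
    have h10 : ((10:ℝ) ^ M) ≠ 0 := by positivity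
    push_cast
    field_simp
  · have := Real.add_one_le_exp (-(θ / 10 ^ M))
    linarith

private lemma even_lt (j : ℕ) {n : ℕ} (hn : n ∈ EvenDigits) (h : n < 10 ^ (2 * j + 1)) :
    n < 10 ^ (2 * j) := by
  obtain ⟨k, hk1, hk2⟩ := hn
  have hkj : k < j := by
    by_contra hkj
    push_neg at hkj
    have : (10 : ℕ) ^ (2 * j + 1) ≤ 10 ^ (2 * k + 1) :=
      Nat.pow_le_pow_right (by norm_num) (by omega)
    omega
  calc n < 10 ^ (2 * k + 2) := hk2
    _ ≤ 10 ^ (2 * j) := Nat.pow_le_pow_right (by norm_num) (by omega)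

private lemma flip_div (a b : ℝ) (hq : q ≠ 1) : (a - b) / (q - 1) = (b - a) / (1 - q) := by
  rw [← neg_div_neg_eq]
  ring_nf

private lemma lower_bound (j : ℕ) (h0 : 0 ≤ q) (h1 : q < 1) :
    (q ^ 10 ^ (2 * j + 1) - q ^ 10 ^ (2 * j + 2)) / (1 - q) ≤ genFun EvenDigits q := by
  rw [genFun_eq]
  refine le_trans ?_ (Summable.sum_le_tsum (Finset.Ico (10 ^ (2 * j + 1)) (10 ^ (2 * j + 2)))
    (fun i _ => ind_nonneg _ h0 i) (summable_ind _ h0 h1))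
  have he : ∀ n ∈ Finset.Ico (10 ^ (2 * j + 1)) (10 ^ (2 * j + 2)),
      EvenDigits.indicator (fun m => q ^ m) n = q ^ n := by
    intro n hn
    rw [Finset.mem_Ico] at hn
    exact Set.indicator_of_mem (show n ∈ EvenDigits from ⟨j, hn.1, hn.2⟩) _
  rw [Finset.sum_congr rfl he,
    geom_sum_Ico h1.ne (Nat.pow_le_pow_right (by norm_num) (by omega)),
    flip_div _ _ h1.ne]

private lemma upper_bound (j : ℕ) (h0 : 0 ≤ q) (h1 : q < 1) :
    genFun EvenDigits q ≤
      (10 : ℝ) ^ (2 * j) + (q ^ 10 ^ (2 * j + 1) + q ^ 10 ^ (2 * j + 2)) * (1 - q)⁻¹ := by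
  have h1q : (0 : ℝ) < 1 - q := by linarith
  set f : ℕ → ℝ := fun n => EvenDigits.indicator (fun m => q ^ m) n with hf
  have hsum : Summable f := summable_ind _ h0 h1
  rw [genFun_eq, ← Summable.sum_add_tsum_nat_add (10 ^ (2 * j + 2)) hsum]
  -- tail bound
  have htail : ∑' i : ℕ, f (i + 10 ^ (2 * j + 2)) ≤ q ^ 10 ^ (2 * j + 2) * (1 - q)⁻¹ := by
    have hsum2 : Summable (fun i : ℕ => q ^ (i + 10 ^ (2 * j + 2))) :=
      (summable_nat_add_iff (10 ^ (2 * j + 2))).mpr (summable_pow h0 h1)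
    have := Summable.tsum_le_tsum (f := fun i : ℕ => f (i + 10 ^ (2 * j + 2)))
      (g := fun i : ℕ => q ^ (i + 10 ^ (2 * j + 2)))
      (fun i => ind_le_pow _ h0 _)
      (hsum.comp_injective (add_left_injective _)) hsum2
    refine this.trans (le_of_eq ?_)
    have : ∀ i : ℕ, q ^ (i + 10 ^ (2 * j + 2)) = q ^ i * q ^ 10 ^ (2 * j + 2) := fun i =>
      pow_add q i _
    rw [tsum_congr this, tsum_mul_right, tsum_geometric_of_lt_one h0 h1, mul_comm]
  -- head
  have hsplit1 : (10 : ℕ) ^ (2 * j) ≤ 10 ^ (2 * j + 1) :=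
    Nat.pow_le_pow_right (by norm_num) (by omega)
  have hsplit2 : (10 : ℕ) ^ (2 * j + 1) ≤ 10 ^ (2 * j + 2) :=
    Nat.pow_le_pow_right (by norm_num) (by omega)
  have hhead : ∑ n ∈ Finset.range (10 ^ (2 * j + 2)), f n ≤
      (10 : ℝ) ^ (2 * j) + q ^ 10 ^ (2 * j + 1) * (1 - q)⁻¹ := by
    rw [Finset.range_eq_Ico,
      ← Finset.sum_Ico_consecutive _ (Nat.zero_le (10 ^ (2 * j + 1))) hsplit2,
      ← Finset.sum_Ico_consecutive _ (Nat.zero_le (10 ^ (2 * j))) hsplit1]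
    have hA : ∑ n ∈ Finset.Ico 0 (10 ^ (2 * j)), f n ≤ (10 : ℝ) ^ (2 * j) := by
      calc ∑ n ∈ Finset.Ico 0 (10 ^ (2 * j)), f n
          ≤ ∑ _n ∈ Finset.Ico 0 (10 ^ (2 * j)), (1 : ℝ) := by
            refine Finset.sum_le_sum fun n _ => ?_
            exact (ind_le_pow _ h0 n).trans (pow_le_one₀ h0 h1.le)
        _ = (10 : ℝ) ^ (2 * j) := by simp
    have hB : ∑ n ∈ Finset.Ico (10 ^ (2 * j)) (10 ^ (2 * j + 1)), f n = 0 := by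
      refine Finset.sum_eq_zero fun n hn => ?_
      rw [Finset.mem_Ico] at hn
      refine Set.indicator_of_notMem (fun hmem => ?_) _
      exact absurd (even_lt j hmem hn.2) (by omega)
    have hC : ∑ n ∈ Finset.Ico (10 ^ (2 * j + 1)) (10 ^ (2 * j + 2)), f n ≤
        q ^ 10 ^ (2 * j + 1) * (1 - q)⁻¹ := by
      calc ∑ n ∈ Finset.Ico (10 ^ (2 * j + 1)) (10 ^ (2 * j + 2)), f n
          ≤ ∑ n ∈ Finset.Ico (10 ^ (2 * j + 1)) (10 ^ (2 * j + 2)), q ^ n :=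
            Finset.sum_le_sum fun n _ => ind_le_pow _ h0 n
        _ = (q ^ 10 ^ (2 * j + 1) - q ^ 10 ^ (2 * j + 2)) / (1 - q) := by
            rw [geom_sum_Ico h1.ne hsplit2, flip_div _ _ h1.ne]
        _ ≤ q ^ 10 ^ (2 * j + 1) * (1 - q)⁻¹ := by
            rw [div_eq_mul_inv]
            have : (0:ℝ) ≤ q ^ 10 ^ (2 * j + 2) := pow_nonneg h0 _
            have hinv : (0:ℝ) ≤ (1 - q)⁻¹ := by positivity
            nlinarith
    linarith
  linarith

end Aux

theorem evenDigits_incomparable :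
    ¬ GermLE EvenDigits EvenDigitsᶜ ∧ ¬ GermLE EvenDigitsᶜ EvenDigits := by
  have key : ∀ ε > (0:ℝ), ∀ θ : ℝ, 0 < θ → θ ≤ 2 →
      ∃ n : ℕ, ∃ q : ℝ, q ∈ Set.Ioo (1 - ε) (1:ℝ) ∧ 0 < q ∧
        q ^ (10 ^ (2 * n + 1)) = Real.exp (-θ) ∧ 1 - q ≤ θ / 10 ^ (2 * n + 1) := by
    intro ε hε θ hθ0 hθ2
    obtain ⟨n, hn⟩ := exists_nat_gt (2 / ε)
    obtain ⟨q, hq0, hq1, hqc, hgap⟩ := exists_q θ hθ0 (2 * n + 1)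
    refine ⟨n, q, ⟨?_, hq1⟩, hq0, hqc, hgap⟩
    have hnlt : (n : ℝ) + 1 ≤ (10 : ℝ) ^ (2 * n + 1) := by
      have : n + 1 ≤ 10 ^ (2 * n + 1) := (Nat.lt_pow_self (n := n) (by norm_num)).trans_le
        (Nat.pow_le_pow_right (by norm_num) (by omega))
      exact_mod_cast this
    have hne : (0:ℝ) < (n:ℝ) + 1 := by positivity
    have h1 : θ / 10 ^ (2 * n + 1) < ε := by
      have h2 : θ / (10:ℝ) ^ (2 * n + 1) ≤ 2 / ((n:ℝ) + 1) :=
        div_le_div₀ (by norm_num) hθ2 hne hnlt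
      have h3 : 2 / ((n:ℝ) + 1) < ε := by
        rw [div_lt_iff₀ hne]
        have : 2 / ε < (n:ℝ) + 1 := by linarith
        rw [div_lt_iff₀ hε] at this
        linarith
      linarith
    linarith
  -- numeric exp bounds
  have hexp_half : Real.exp (-(1/2:ℝ)) ≤ 2/3 := by
    have h := Real.add_one_le_exp (1/2:ℝ)
    rw [Real.exp_neg]
    rw [show ((2:ℝ)/3) = ((3:ℝ)/2)⁻¹ by norm_num]
    exact inv_anti₀ (by norm_num) (by linarith)
  have hexp_32 : Real.exp (-(3/2:ℝ)) ≤ 2/5 := by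
    have h := Real.add_one_le_exp (3/2:ℝ)
    rw [Real.exp_neg]
    rw [show ((2:ℝ)/5) = ((5:ℝ)/2)⁻¹ by norm_num]
    exact inv_anti₀ (by norm_num) (by linarith)
  constructor
  · rintro ⟨ε, hε, hle⟩
    obtain ⟨n, q, hqmem, hq0, hqc, -⟩ := key ε hε (3/10) (by norm_num) (by norm_num)
    have hq1 : q < 1 := hqmem.2
    have h1q : (0:ℝ) < 1 - q := by linarith
    have hcmp := hle q hqmem
    have hadd := genFun_add_compl EvenDigits hq0.le hq1
    have hlow := lower_bound n hq0.le hq1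
    have hpow2 : q ^ 10 ^ (2 * n + 2) = Real.exp (-3) := by
      have h10 : 10 ^ (2 * n + 2) = 10 ^ (2 * n + 1) * 10 := by ring
      rw [h10, pow_mul, hqc, ← Real.exp_nat_mul]
      norm_num
    rw [hqc, hpow2] at hlow
    -- bounds: exp(-3/10) ≥ 7/10, exp(-3) ≤ 4/25
    have hb1 : (7:ℝ)/10 ≤ Real.exp (-(3/10:ℝ)) := by
      have := Real.add_one_le_exp (-(3/10:ℝ)); linarith
    have hb2 : Real.exp (-3:ℝ) ≤ 4/25 := by
      have h1 : Real.exp (-3:ℝ) = Real.exp (-(3/2:ℝ)) ^ 2 := by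
        rw [← Real.exp_nat_mul]; norm_num
      have h2 : Real.exp (-(3/2:ℝ)) ^ 2 ≤ (2/5:ℝ) ^ 2 := by
        have := Real.exp_pos (-(3/2:ℝ))
        nlinarith
      rw [h1]; linarith [h2]
    have hmul : Real.exp (-(3/10:ℝ)) - Real.exp (-3:ℝ) ≤ genFun EvenDigits q * (1 - q) := by
      have h := (div_le_iff₀ h1q).mp hlow
      have h310 : Real.exp (-(3/10:ℝ)) = Real.exp (-(3:ℝ)/10) := by norm_num
      rw [h310]
      linarith [h]
    have hone : genFun EvenDigits q * (1 - q) + genFun EvenDigitsᶜ q * (1 - q) = 1 := by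
      have h := congrArg (· * (1 - q)) hadd
      rw [inv_mul_cancel₀ (by linarith : (1:ℝ) - q ≠ 0)] at h
      linear_combination h
    have h2 : genFun EvenDigits q * (1 - q) ≤ genFun EvenDigitsᶜ q * (1 - q) :=
      mul_le_mul_of_nonneg_right hcmp h1q.le
    linarith
  · rintro ⟨ε, hε, hle⟩
    obtain ⟨n, q, hqmem, hq0, hqc, hgap⟩ := key ε hε 2 (by norm_num) (by norm_num)
    have hq1 : q < 1 := hqmem.2
    have h1q : (0:ℝ) < 1 - q := by linarith
    have hcmp := hle q hqmem
    have hadd := genFun_add_compl EvenDigits hq0.le hq1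
    have hup := upper_bound n hq0.le hq1
    have hpow2 : q ^ 10 ^ (2 * n + 2) = Real.exp (-20) := by
      have h10 : 10 ^ (2 * n + 2) = 10 ^ (2 * n + 1) * 10 := by ring
      rw [h10, pow_mul, hqc, ← Real.exp_nat_mul]
      norm_num
    rw [hqc, hpow2] at hup
    have hb1 : Real.exp (-2:ℝ) ≤ 16/81 := by
      have h1 : Real.exp (-2:ℝ) = Real.exp (-(1/2:ℝ)) ^ 4 := by
        rw [← Real.exp_nat_mul]; norm_num
      have h2 : Real.exp (-(1/2:ℝ)) ^ 4 ≤ (2/3:ℝ) ^ 4 :=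
        pow_le_pow_left₀ (Real.exp_pos _).le hexp_half 4
      rw [h1]
      calc Real.exp (-(1/2:ℝ)) ^ 4 ≤ (2/3:ℝ) ^ 4 := h2
        _ ≤ 16/81 := by norm_num
    have hb2 : Real.exp (-20:ℝ) ≤ (16/81:ℝ) ^ 2 := by
      have h0 : Real.exp (-20:ℝ) ≤ Real.exp (-4:ℝ) := Real.exp_le_exp.mpr (by norm_num)
      have h1 : Real.exp (-4:ℝ) = Real.exp (-2:ℝ) ^ 2 := by
        rw [← Real.exp_nat_mul]; norm_num
      have h2 : Real.exp (-2:ℝ) ^ 2 ≤ (16/81:ℝ) ^ 2 :=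
        pow_le_pow_left₀ (Real.exp_pos _).le hb1 2
      linarith
    have hinv : (1 - q) * (1 - q)⁻¹ = 1 := mul_inv_cancel₀ (by linarith)
    have hupm : genFun EvenDigits q * (1 - q) ≤
        (10:ℝ) ^ (2 * n) * (1 - q) + (Real.exp (-2) + Real.exp (-20)) := by
      have h := mul_le_mul_of_nonneg_right hup h1q.le
      have hexp : ((10:ℝ) ^ (2 * n) + (Real.exp (-2) + Real.exp (-20)) * (1 - q)⁻¹) * (1 - q)
          = (10:ℝ) ^ (2 * n) * (1 - q) + (Real.exp (-2) + Real.exp (-20)) := by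
        have : ((10:ℝ) ^ (2 * n) + (Real.exp (-2) + Real.exp (-20)) * (1 - q)⁻¹) * (1 - q)
            = (10:ℝ) ^ (2 * n) * (1 - q) + (Real.exp (-2) + Real.exp (-20)) * ((1 - q)⁻¹ * (1 - q)) := by
          ring
        rw [this, inv_mul_cancel₀ (by linarith : (1:ℝ) - q ≠ 0), mul_one]
      exact h.trans_eq hexp
    have hsmall : (10:ℝ) ^ (2 * n) * (1 - q) ≤ 1/5 := by
      have hp : (0:ℝ) ≤ (10:ℝ) ^ (2 * n) := by positivity
      have h := mul_le_mul_of_nonneg_left hgap hp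
      have heq : (10:ℝ) ^ (2 * n) * (2 / 10 ^ (2 * n + 1)) = 1/5 := by
        rw [pow_succ]
        have : ((10:ℝ) ^ (2 * n)) ≠ 0 := by positivity
        field_simp
        ring
      linarith
    have hone : genFun EvenDigits q * (1 - q) + genFun EvenDigitsᶜ q * (1 - q) = 1 := by
      have h := congrArg (· * (1 - q)) hadd
      rw [inv_mul_cancel₀ (by linarith : (1:ℝ) - q ≠ 0)] at h
      linear_combination h
    have h2 : genFun EvenDigitsᶜ q * (1 - q) ≤ genFun EvenDigits q * (1 - q) :=
      mul_le_mul_of_nonneg_right hcmp h1q.le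
    have hnum : 2 * ((1:ℝ)/5 + 16/81 + (16/81:ℝ)^2) < 1 := by norm_num
    nlinarith
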